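/- Let F_a(t) = ∑_k ((a)_k/k!)^s t^k with coefficients A_k, and F_{a'}(t) with coefficients A^{(1)}_k where a' is the Dwork prime. Then for every k ≥ 1 with p | k, A^{(1)}_{k/p} / A_k = ({1}_k / {a}_k)^s. -/

import Mathlib

open Finset Classical
noncomputable section

/-- `{α}_n = ∏_{1 ≤ i ≤ n, p ∤ (α+i-1)} (α+i-1)`. -/
def sprod (p : ℕ) [Fact p.Prime] (α : ℤ_[p]) (n : ℕ) : ℤ_[p] :=
  ∏ i ∈ Finset.range n, if (p : ℤ_[p]) ∣ (α + (i : ℤ_[p])) then 1 else (α + (i : ℤ_[p]))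

lemma ascPochhammer_eval_prod' {p' : ℕ} [Fact p'.Prime] (n : ℕ) (x : ℚ_[p']) :
    (ascPochhammer ℚ_[p'] n).eval x = ∏ i ∈ Finset.range n, (x + i) := by
  induction n with
  | zero => simp
  | succ n ih => rw [ascPochhammer_succ_eval, ih, Finset.prod_range_succ]

lemma padicInt_dvd_cast_iff (p : ℕ) [Fact p.Prime] (z : ℤ) :
    (p : ℤ_[p]) ∣ (z : ℤ_[p]) ↔ (p : ℤ) ∣ z := by
  rw [← PadicInt.norm_lt_one_iff_dvd, PadicInt.norm_int_lt_one_iff_dvd]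

lemma padicInt_coe_prod {p : ℕ} [Fact p.Prime] (s : Finset ℕ) (f : ℕ → ℤ_[p]) :
    ((∏ i ∈ s, f i : ℤ_[p]) : ℚ_[p]) = ∏ i ∈ s, ((f i : ℤ_[p]) : ℚ_[p]) :=
  map_prod (PadicInt.Coe.ringHom) _ _

/-- key splitting lemma -/
lemma key_split (p : ℕ) [Fact p.Prime] (α α' : ℤ_[p]) (l : ℕ) (hl : l < p)
    (hla : α + (l : ℤ_[p]) = (p : ℤ_[p]) * α') (m : ℕ) :
    ∏ i ∈ Finset.range (p * m), ((α : ℚ_[p]) + i)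
      = ((sprod p α (p * m) : ℤ_[p]) : ℚ_[p]) * (p : ℚ_[p]) ^ m
        * ∏ j ∈ Finset.range m, ((α' : ℚ_[p]) + j) := by
  have hp : 0 < p := (Fact.out : p.Prime).pos
  -- divisibility criterion
  have hc : ∀ i : ℕ, ((p : ℤ_[p]) ∣ (α + (i : ℤ_[p]))) ↔ i % p = l := by
    intro i
    have hα : α + (i : ℤ_[p]) = (p : ℤ_[p]) * α' + (((i : ℤ) - (l : ℤ) : ℤ) : ℤ_[p]) := by
      push_cast
      rw [← hla]; ring
    rw [hα]
    constructor
    · intro h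
      have h2 : (p : ℤ_[p]) ∣ (((i : ℤ) - (l : ℤ) : ℤ) : ℤ_[p]) := by
        have := dvd_sub h (Dvd.intro α' rfl)
        simpa using this
      rw [padicInt_dvd_cast_iff] at h2
      have h3 : (l : ℤ) ≡ (i : ℤ) [ZMOD (p : ℤ)] := (Int.modEq_iff_dvd).mpr h2
      have h4 : (l : ℤ) % (p : ℤ) = (i : ℤ) % (p : ℤ) := h3
      have h5 : ((l % p : ℕ) : ℤ) = ((i % p : ℕ) : ℤ) := by
        rw [Int.natCast_mod, Int.natCast_mod, h4]
      have h6 : l % p = i % p := by exact_mod_cast h5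
      rw [← h6, Nat.mod_eq_of_lt hl]
    · intro h
      have h2 : (p : ℤ) ∣ ((i : ℤ) - (l : ℤ)) := by
        have h3 : (l : ℤ) % (p : ℤ) = (i : ℤ) % (p : ℤ) := by
          rw [← Int.natCast_mod, ← Int.natCast_mod, h, Nat.mod_eq_of_lt hl]
        have h4 : (p : ℤ) ∣ (i : ℤ) - (l : ℤ) := Int.ModEq.dvd h3
        exact h4
      rw [← padicInt_dvd_cast_iff p] at h2
      exact dvd_add (Dvd.intro α' rfl) h2
  -- cast sprod to ℚ_[p]
  have hsprod : ((sprod p α (p * m) : ℤ_[p]) : ℚ_[p])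
      = ∏ i ∈ Finset.range (p * m),
          (if i % p = l then 1 else ((α : ℚ_[p]) + i)) := by
    rw [sprod, padicInt_coe_prod]
    refine Finset.prod_congr rfl fun i _ => ?_
    rw [if_congr (hc i) rfl rfl]
    split <;> push_cast <;> simp
  rw [hsprod]
  -- the complementary product
  have hsplit : ∏ i ∈ Finset.range (p * m), ((α : ℚ_[p]) + i)
      = (∏ i ∈ Finset.range (p * m), (if i % p = l then 1 else ((α : ℚ_[p]) + i)))
        * (∏ i ∈ Finset.range (p * m), (if i % p = l then ((α : ℚ_[p]) + i) else 1)) := by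
    rw [← Finset.prod_mul_distrib]
    refine Finset.prod_congr rfl fun i _ => ?_
    split <;> ring
  rw [hsplit, mul_assoc]
  congr 1
  -- compute the divisible part
  have himg : (Finset.range (p * m)).filter (fun i => i % p = l)
      = (Finset.range m).image (fun j => p * j + l) := by
    ext i
    simp only [Finset.mem_filter, Finset.mem_range, Finset.mem_image]
    constructor
    · rintro ⟨h1, h2⟩
      refine ⟨i / p, ?_, ?_⟩
      · rw [Nat.div_lt_iff_lt_mul hp, mul_comm]
        exact h1
      · have := Nat.div_add_mod i p
        omega
    · rintro ⟨j, hj, rfl⟩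
      refine ⟨?_, ?_⟩
      · calc p * j + l < p * j + p := by omega
          _ = p * (j + 1) := by ring
          _ ≤ p * m := Nat.mul_le_mul_left p (by omega)
      · rw [Nat.mul_add_mod, Nat.mod_eq_of_lt hl]
  have hfilter : ∏ i ∈ Finset.range (p * m), (if i % p = l then ((α : ℚ_[p]) + i) else 1)
      = ∏ i ∈ (Finset.range (p * m)).filter (fun i => i % p = l), ((α : ℚ_[p]) + i) :=
    (Finset.prod_filter _ _).symm
  rw [hfilter, himg, Finset.prod_image (by intro x _ y _ h; exact Nat.eq_of_mul_eq_mul_left hp (by simp only at h; omega))]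
  have hterm : ∀ j : ℕ, (α : ℚ_[p]) + ((p * j + l : ℕ) : ℚ_[p])
      = (p : ℚ_[p]) * ((α' : ℚ_[p]) + j) := by
    intro j
    have h0 : ((α + (l : ℤ_[p]) : ℤ_[p]) : ℚ_[p]) = (((p : ℤ_[p]) * α' : ℤ_[p]) : ℚ_[p]) := by
      exact_mod_cast congrArg _ hla
    push_cast at h0 ⊢
    rw [show (α : ℚ_[p]) + ((p : ℚ_[p]) * j + l) = ((α : ℚ_[p]) + l) + p * j by ring, h0]
    ring
  calc ∏ j ∈ Finset.range m, ((α : ℚ_[p]) + ((p * j + l : ℕ) : ℚ_[p]))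
      = ∏ j ∈ Finset.range m, ((p : ℚ_[p]) * ((α' : ℚ_[p]) + j)) :=
        Finset.prod_congr rfl fun j _ => hterm j
    _ = (p : ℚ_[p]) ^ m * ∏ j ∈ Finset.range m, ((α' : ℚ_[p]) + j) := by
        rw [Finset.prod_mul_distrib, Finset.prod_const, Finset.card_range]

/-- Asakura's Lemma 3.6: with `A_k = ((a)_k/k!)^s` and `A^{(1)}_k = ((a')_k/k!)^s`
(`a'` the Dwork prime), for `k ≥ 1` with `p | k` one has
`A^{(1)}_{k/p} / A_k = ({1}_k / {a}_k)^s`, stated in the equivalent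
cross-multiplied form in `ℚ_p` (denominators are nonzero). -/
theorem coeff_ratio_eq_sprod_pow (p s : ℕ) [Fact p.Prime] (hs : 1 ≤ s)
    (a a' : ℤ_[p]) (ha : ∀ m : ℕ, a ≠ -(m : ℤ_[p]))
    (l : ℕ) (hl : l < p) (hla : a + (l : ℤ_[p]) = (p : ℤ_[p]) * a')
    (A A1 : ℕ → ℤ_[p])
    (hA : ∀ k, (A k : ℚ_[p]) =
      ((ascPochhammer ℚ_[p] k).eval (a : ℚ_[p]) / (k.factorial : ℚ_[p])) ^ s)
    (hA1 : ∀ k, (A1 k : ℚ_[p]) =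
      ((ascPochhammer ℚ_[p] k).eval (a' : ℚ_[p]) / (k.factorial : ℚ_[p])) ^ s)
    (k : ℕ) (hk : 1 ≤ k) (hpk : p ∣ k) :
    (A1 (k / p) : ℚ_[p]) * ((sprod p a k : ℤ_[p]) : ℚ_[p]) ^ s
      = (A k : ℚ_[p]) * ((sprod p 1 k : ℤ_[p]) : ℚ_[p]) ^ s := by
  have hp : 0 < p := (Fact.out : p.Prime).pos
  obtain ⟨m, rfl⟩ := hpk
  have hm : p * m / p = m := Nat.mul_div_cancel_left m hp
  rw [hm, hA, hA1, ascPochhammer_eval_prod', ascPochhammer_eval_prod']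
  -- identity for a
  have keyA := key_split p a a' l hl hla m
  -- identity for 1
  have h1l : (1 : ℤ_[p]) + ((p - 1 : ℕ) : ℤ_[p]) = (p : ℤ_[p]) * 1 := by
    have : ((p - 1 : ℕ) : ℤ_[p]) = (p : ℤ_[p]) - 1 := by
      rw [Nat.cast_sub (by omega)]; simp
    rw [this]; ring
  have key1 := key_split p 1 1 (p - 1) (by omega) h1l m
  push_cast at key1
  -- factorial casts
  have hfact : ∀ n : ℕ, ((n.factorial : ℚ_[p]))
      = ∏ j ∈ Finset.range n, ((1 : ℚ_[p]) + j) := by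
    intro n
    rw [← Finset.prod_range_add_one_eq_factorial n]
    push_cast
    refine Finset.prod_congr rfl fun j _ => by ring
  -- nonzeroness
  have hpne : ((p : ℚ_[p])) ≠ 0 := Nat.cast_ne_zero.mpr (by omega)
  have hmfact : ((m.factorial : ℚ_[p])) ≠ 0 := Nat.cast_ne_zero.mpr (Nat.factorial_ne_zero m)
  have hkfact : (((p * m).factorial : ℚ_[p])) ≠ 0 :=
    Nat.cast_ne_zero.mpr (Nat.factorial_ne_zero _)
  have hs1ne : ((sprod p 1 (p * m) : ℤ_[p]) : ℚ_[p]) ≠ 0 := by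
    rw [sprod, padicInt_coe_prod]
    refine Finset.prod_ne_zero_iff.mpr fun i _ => ?_
    split
    · exact one_ne_zero
    · push_cast
      intro h
      have h2 : ((1 : ℚ_[p]) + i) = (((i + 1 : ℕ) : ℚ_[p])) := by push_cast; ring
      rw [h2] at h
      exact Nat.cast_ne_zero.mpr (by omega) h
  -- base identity
  have base : (∏ j ∈ Finset.range m, ((a' : ℚ_[p]) + j)) / (m.factorial : ℚ_[p])
        * ((sprod p a (p * m) : ℤ_[p]) : ℚ_[p])
      = (∏ i ∈ Finset.range (p * m), ((a : ℚ_[p]) + i)) / ((p * m).factorial : ℚ_[p])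
        * ((sprod p 1 (p * m) : ℤ_[p]) : ℚ_[p]) := by
    have hk1 : (((p * m).factorial : ℚ_[p]))
        = ((sprod p 1 (p * m) : ℤ_[p]) : ℚ_[p]) * (p : ℚ_[p]) ^ m * (m.factorial : ℚ_[p]) := by
      rw [hfact (p * m), hfact m, key1]
    rw [keyA, hk1]
    have hppow : ((p : ℚ_[p])) ^ m ≠ 0 := pow_ne_zero _ hpne
    field_simp
  rw [← mul_pow, ← mul_pow, base]

end
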